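/- arXiv:2312.13628 — 4 statements merged into one kernel-verified Lean document; each statement's English description precedes it below -/
import Mathlib

section
/- For any real numbers a, b, c and positive reals σ1, σy, σ2, σ3, writing S := σ2² + c²·σy², the vector w := (a·σ2²/S, c·σy²/S, −b·c·σy²/S) ∈ ℝ³ satisfies the normal equations Σ₀ · w = m, where m := (σ1²·a, σ1²·a²·c + σy²·c, 0). Consequently Σ₀⁻¹ · m = w (Equation (2) of the paper). -/
open Matrix

/-- The ERM weight vector `w` of Equation (2) satisfies the normal equations
`Sig0 ⬝ w = m`, and consequently `Sig0⁻¹ ⬝ m = w`. -/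
theorem erm_weight_solves_normal_equations
    (a b c σ1 σy σ2 σ3 : ℝ)
    (hσ1 : 0 < σ1) (hσy : 0 < σy) (hσ2 : 0 < σ2) (hσ3 : 0 < σ3)
    (S : ℝ) (hS : S = σ2 ^ 2 + c ^ 2 * σy ^ 2)
    (Sig0 : Matrix (Fin 3) (Fin 3) ℝ)
    (hSig0 : Sig0 = !![σ1 ^ 2, σ1 ^ 2 * a * c, 0;
        σ1 ^ 2 * a * c, σ1 ^ 2 * a ^ 2 * c ^ 2 + σ2 ^ 2 + σ3 ^ 2 * b ^ 2 + σy ^ 2 * c ^ 2,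
          σ3 ^ 2 * b;
        0, σ3 ^ 2 * b, σ3 ^ 2])
    (w m : Fin 3 → ℝ)
    (hw : w = ![a * σ2 ^ 2 / S, c * σy ^ 2 / S, -(b * c * σy ^ 2) / S])
    (hm : m = ![σ1 ^ 2 * a, σ1 ^ 2 * a ^ 2 * c + σy ^ 2 * c, 0]) :
    Sig0 *ᵥ w = m ∧ Sig0⁻¹ *ᵥ m = w := by
  have hSpos : 0 < S := by
    subst hS
    positivity
  have hSne : S ≠ 0 := ne_of_gt hSpos
  have hmain : Sig0 *ᵥ w = m := by
    subst hS hSig0 hw hm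
    funext i
    fin_cases i <;>
      simp [Matrix.mulVec, dotProduct, Fin.sum_univ_three] <;>
      field_simp <;> ring
  refine ⟨hmain, ?_⟩
  have hdet : Sig0.det = σ1 ^ 2 * σ3 ^ 2 * S := by
    rw [hSig0, Matrix.det_fin_three]
    simp [hS]
    ring
  have hdetne : IsUnit Sig0.det := by
    rw [hdet]
    exact (mul_pos (mul_pos (pow_pos hσ1 2) (pow_pos hσ3 2)) hSpos).ne'.isUnit
  calc Sig0⁻¹ *ᵥ m = Sig0⁻¹ *ᵥ (Sig0 *ᵥ w) := by rw [hmain]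
    _ = (Sig0⁻¹ * Sig0) *ᵥ w := Matrix.mulVec_mulVec _ _ _
    _ = w := by rw [Matrix.nonsing_inv_mul _ hdetne, Matrix.one_mulVec]
end

section
/- Under the linear structural causal model, the solution of the population least-squares problem is given by Equation (2): the matrix Σ := E[x·xᵀ] ∈ ℝ^{3×3} is invertible and the vector Σ⁻¹ · E[x·y] equals w = (a·σ2²/S, c·σy²/S, −b·c·σy²/S), where S := σ2² + c²·σy². -/
open MeasureTheory ProbabilityTheory Matrix Real
open scoped NNReal ENNReal

namespace ErmAux

lemma gauss_integral_eq (v : ℝ≥0) (hv : v ≠ 0) (g : ℝ → ℝ) :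
    ∫ x, g x ∂(gaussianReal 0 v) = ∫ x, gaussianPDFReal 0 v x * g x := by
  rw [gaussianReal_of_var_ne_zero _ hv]
  rw [show gaussianPDF 0 v = fun x => ((Real.toNNReal (gaussianPDFReal 0 v x) : ℝ≥0) : ℝ≥0∞)
    from rfl]
  rw [integral_withDensity_eq_integral_smul ((measurable_gaussianPDFReal 0 v).real_toNNReal) g]
  refine integral_congr_ae (Filter.Eventually.of_forall fun x => ?_)
  dsimp only
  rw [NNReal.smul_def, Real.coe_toNNReal _ (gaussianPDFReal_nonneg _ _ _), smul_eq_mul]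

lemma gauss_integrable_iff (v : ℝ≥0) (hv : v ≠ 0) (g : ℝ → ℝ) :
    Integrable g (gaussianReal 0 v) ↔
      Integrable (fun x => gaussianPDFReal 0 v x * g x) := by
  rw [gaussianReal_of_var_ne_zero _ hv]
  rw [show gaussianPDF 0 v = fun x => ((Real.toNNReal (gaussianPDFReal 0 v x) : ℝ≥0) : ℝ≥0∞)
    from rfl]
  rw [integrable_withDensity_iff_integrable_smul
    ((measurable_gaussianPDFReal 0 v).real_toNNReal)]
  have : (fun x => (Real.toNNReal (gaussianPDFReal 0 v x)) • g x)
      = fun x => gaussianPDFReal 0 v x * g x := by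
    funext x
    rw [NNReal.smul_def, Real.coe_toNNReal _ (gaussianPDFReal_nonneg _ _ _), smul_eq_mul]
  rw [this]

lemma toNNReal_ne_zero {v : ℝ} (hv : 0 < v) : Real.toNNReal v ≠ 0 := by
  simp [Real.toNNReal_eq_zero, not_le, hv]

lemma pdf_eq (v : ℝ) (hv : 0 < v) (x : ℝ) :
    gaussianPDFReal 0 (Real.toNNReal v) x
      = (Real.sqrt (2 * π * v))⁻¹ * Real.exp (-(2 * v)⁻¹ * x ^ 2) := by
  unfold gaussianPDFReal
  rw [Real.coe_toNNReal _ hv.le, show -(x - 0) ^ 2 / (2 * v) = -(2 * v)⁻¹ * x ^ 2 by ring]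

lemma odd_integral (b : ℝ) : ∫ x : ℝ, x * Real.exp (-b * x ^ 2) = 0 := by
  have h := integral_neg_eq_self (fun x : ℝ => x * Real.exp (-b * x ^ 2)) volume
  simp only [neg_sq, neg_mul] at h
  rw [integral_neg] at h
  simp only [neg_mul]
  linarith

lemma integral_id_gauss (v : ℝ) (hv : 0 < v) :
    ∫ x, x ∂(gaussianReal 0 (Real.toNNReal v)) = 0 := by
  rw [gauss_integral_eq _ (toNNReal_ne_zero hv)]
  have h0 : (fun x : ℝ => gaussianPDFReal 0 (Real.toNNReal v) x * x)
      = fun x => (Real.sqrt (2 * π * v))⁻¹ * (x * Real.exp (-(2 * v)⁻¹ * x ^ 2)) := by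
    funext x; rw [pdf_eq v hv]; ring
  rw [h0, integral_const_mul, odd_integral, mul_zero]

lemma integral_sq_gauss (v : ℝ) (hv : 0 < v) :
    ∫ x, x ^ 2 ∂(gaussianReal 0 (Real.toNNReal v)) = v := by
  rw [gauss_integral_eq _ (toNNReal_ne_zero hv)]
  have hb : (0:ℝ) < (2 * v)⁻¹ := by positivity
  have h2v : (0:ℝ) < 2 * v := by positivity
  have h0 : (fun x : ℝ => gaussianPDFReal 0 (Real.toNNReal v) x * x ^ 2)
      = fun x => (Real.sqrt (2 * π * v))⁻¹ * (x ^ 2 * Real.exp (-(2 * v)⁻¹ * x ^ 2)) := by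
    funext x; rw [pdf_eq v hv]; ring
  rw [h0, integral_const_mul]
  have h1 : ∫ x : ℝ, x ^ 2 * Real.exp (-(2 * v)⁻¹ * x ^ 2)
      = 2 * ∫ x in Set.Ioi (0:ℝ), x ^ 2 * Real.exp (-(2 * v)⁻¹ * x ^ 2) := by
    rw [← integral_comp_abs (f := fun x => x ^ 2 * Real.exp (-(2 * v)⁻¹ * x ^ 2))]
    refine integral_congr_ae (Filter.Eventually.of_forall fun x => ?_)
    simp [sq_abs]
  have h2 := integral_rpow_mul_exp_neg_mul_rpow (p := 2) (q := 2) two_pos (by norm_num) hb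
  simp only [Real.rpow_two] at h2
  rw [h1, h2]
  have hΓ : Real.Gamma (((2:ℝ) + 1) / 2) = Real.sqrt π / 2 := by
    rw [show ((2:ℝ) + 1) / 2 = 1 / 2 + 1 by norm_num, Real.Gamma_add_one (by norm_num),
      Real.Gamma_one_half_eq]
    ring
  have hpow : ((2 * v)⁻¹ : ℝ) ^ (-((2:ℝ) + 1) / 2) = (2 * v) * Real.sqrt (2 * v) := by
    rw [Real.inv_rpow h2v.le, ← Real.rpow_neg h2v.le]
    rw [show -(-((2:ℝ) + 1) / 2) = 1 + 1 / 2 by norm_num, Real.rpow_add h2v, Real.rpow_one,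
      ← Real.sqrt_eq_rpow]
  rw [hΓ, hpow]
  rw [show 2 * π * v = (2 * v) * π by ring, Real.sqrt_mul (by positivity : (0:ℝ) ≤ 2 * v)]
  have hs : (0:ℝ) < Real.sqrt (2 * v) := Real.sqrt_pos.mpr (by positivity)
  have hp : (0:ℝ) < Real.sqrt π := Real.sqrt_pos.mpr Real.pi_pos
  field_simp

lemma integrable_id_gauss (v : ℝ) (hv : 0 < v) :
    Integrable (fun x : ℝ => x) (gaussianReal 0 (Real.toNNReal v)) := by
  rw [gauss_integrable_iff _ (toNNReal_ne_zero hv)]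
  have h := integrable_rpow_mul_exp_neg_mul_sq (b := (2 * v)⁻¹) (by positivity)
    (s := 1) (by norm_num)
  simp only [Real.rpow_one] at h
  refine (h.const_mul ((Real.sqrt (2 * π * v))⁻¹)).congr
    (Filter.Eventually.of_forall fun x => ?_)
  dsimp only
  rw [pdf_eq v hv]; ring

lemma integrable_sq_gauss (v : ℝ) (hv : 0 < v) :
    Integrable (fun x : ℝ => x ^ 2) (gaussianReal 0 (Real.toNNReal v)) := by
  rw [gauss_integrable_iff _ (toNNReal_ne_zero hv)]
  have h := integrable_rpow_mul_exp_neg_mul_sq (b := (2 * v)⁻¹) (by positivity)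
    (s := 2) (by norm_num)
  simp only [Real.rpow_two] at h
  refine (h.const_mul ((Real.sqrt (2 * π * v))⁻¹)).congr
    (Filter.Eventually.of_forall fun x => ?_)
  dsimp only
  rw [pdf_eq v hv]; ring

end ErmAux


section Main
open ErmAux

/-- Under the linear SCM, the second-moment matrix `Σ = E[x xᵀ]` is invertible
and the population least-squares solution `Σ⁻¹ E[x y]` equals the ERM weight
vector `w` of Equation (2). -/
theorem erm_solution_of_linear_scm
    {Ω : Type*} [MeasurableSpace Ω] (P : Measure Ω) [IsProbabilityMeasure P]
    (a b c σ1 σy σ2 σ3 : ℝ)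
    (hσ1 : 0 < σ1) (hσy : 0 < σy) (hσ2 : 0 < σ2) (hσ3 : 0 < σ3)
    (u1 uy u2 u3 : Ω → ℝ)
    (hm1 : Measurable u1) (hmy : Measurable uy)
    (hm2 : Measurable u2) (hm3 : Measurable u3)
    (hindep : iIndepFun ![u1, uy, u2, u3] P)
    (hlaw1 : P.map u1 = gaussianReal 0 (Real.toNNReal (σ1 ^ 2)))
    (hlawy : P.map uy = gaussianReal 0 (Real.toNNReal (σy ^ 2)))
    (hlaw2 : P.map u2 = gaussianReal 0 (Real.toNNReal (σ2 ^ 2)))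
    (hlaw3 : P.map u3 = gaussianReal 0 (Real.toNNReal (σ3 ^ 2)))
    (x1 y x2 x3 : Ω → ℝ)
    (hx1 : x1 = u1)
    (hy : y = fun ω => a * x1 ω + uy ω)
    (hx3 : x3 = u3)
    (hx2 : x2 = fun ω => b * x3 ω + c * y ω + u2 ω)
    (x : Fin 3 → Ω → ℝ) (hx : x = ![x1, x2, x3])
    (Sig : Matrix (Fin 3) (Fin 3) ℝ)
    (hSig : Sig = fun i j => ∫ ω, x i ω * x j ω ∂P)
    (m : Fin 3 → ℝ) (hm : m = fun i => ∫ ω, x i ω * y ω ∂P)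
    (S : ℝ) (hS : S = σ2 ^ 2 + c ^ 2 * σy ^ 2) :
    IsUnit Sig.det ∧
    Sig⁻¹ *ᵥ m = ![a * σ2 ^ 2 / S, c * σy ^ 2 / S, -(b * c * σy ^ 2) / S] := by
  subst hS
  set U : Fin 4 → Ω → ℝ := ![u1, uy, u2, u3] with hUdef
  set V : Fin 4 → ℝ := ![σ1 ^ 2, σy ^ 2, σ2 ^ 2, σ3 ^ 2] with hVdef
  have hV : ∀ k, 0 < V k := by
    intro k
    fin_cases k <;> simp [hVdef] <;> positivity
  have hUm : ∀ k, Measurable (U k) := by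
    intro k; fin_cases k <;> simpa [hUdef]
  have hUlaw : ∀ k, P.map (U k) = gaussianReal 0 (Real.toNNReal (V k)) := by
    intro k; fin_cases k <;> simpa [hUdef, hVdef]
  have hmean : ∀ k, ∫ ω, U k ω ∂P = 0 := by
    intro k
    have h := integral_map (μ := P) (hUm k).aemeasurable
      (f := fun s : ℝ => s) measurable_id.aestronglyMeasurable
    rw [hUlaw k] at h
    rw [show (∫ ω, U k ω ∂P) = ∫ ω, (fun s : ℝ => s) (U k ω) ∂P from rfl, ← h]
    exact integral_id_gauss _ (hV k)
  have hsq : ∀ k, ∫ ω, U k ω ^ 2 ∂P = V k := by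
    intro k
    have h := integral_map (μ := P) (hUm k).aemeasurable
      (f := fun s : ℝ => s ^ 2) (measurable_id.pow_const 2).aestronglyMeasurable
    rw [hUlaw k] at h
    rw [show (∫ ω, U k ω ^ 2 ∂P) = ∫ ω, (fun s : ℝ => s ^ 2) (U k ω) ∂P from rfl, ← h]
    exact integral_sq_gauss _ (hV k)
  have hIsq : ∀ k, Integrable (fun ω => U k ω ^ 2) P := by
    intro k
    have h1 : Integrable (fun s : ℝ => s ^ 2) (P.map (U k)) := by
      rw [hUlaw k]; exact integrable_sq_gauss _ (hV k)
    exact (integrable_map_measure (measurable_id.pow_const 2).aestronglyMeasurable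
      (hUm k).aemeasurable).1 h1
  have hInt : ∀ k l, Integrable (fun ω => U k ω * U l ω) P := by
    intro k l
    refine (((hIsq k).add (hIsq l)).div_const 2).mono'
      ((hUm k).mul (hUm l)).aestronglyMeasurable
      (Filter.Eventually.of_forall fun ω => ?_)
    simp only [Pi.add_apply]
    rw [Real.norm_eq_abs, abs_le]
    constructor
    · nlinarith [sq_nonneg (U k ω + U l ω)]
    · nlinarith [sq_nonneg (U k ω - U l ω)]
  have hG : ∀ k l, ∫ ω, U k ω * U l ω ∂P = if k = l then V k else 0 := by
    intro k l
    by_cases hkl : k = l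
    · subst hkl
      rw [if_pos rfl]
      simp_rw [← pow_two]
      exact hsq k
    · rw [if_neg hkl]
      have hind : IndepFun (U k) (U l) P := hindep.indepFun hkl
      have h := IndepFun.integral_fun_mul_eq_mul_integral hind (hUm k).aestronglyMeasurable (hUm l).aestronglyMeasurable
      simpa [hmean k, hmean l] using h
  have key : ∀ A B : Fin 4 → ℝ,
      ∫ ω, (∑ k, A k * U k ω) * (∑ l, B l * U l ω) ∂P = ∑ k, A k * B k * V k := by
    intro A B
    have h1 : ∀ ω, (∑ k, A k * U k ω) * (∑ l, B l * U l ω)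
        = ∑ k, ∑ l, A k * B l * (U k ω * U l ω) := by
      intro ω
      rw [Finset.sum_mul_sum]
      exact Finset.sum_congr rfl fun k _ => Finset.sum_congr rfl fun l _ => by ring
    simp_rw [h1]
    rw [integral_finset_sum _ fun k _ =>
      integrable_finset_sum _ fun l _ => (hInt k l).const_mul _]
    have h2 : ∀ k : Fin 4, ∫ ω, ∑ l, A k * B l * (U k ω * U l ω) ∂P = A k * B k * V k := by
      intro k
      rw [integral_finset_sum _ fun l _ => (hInt k l).const_mul _]
      have h3 : ∀ l : Fin 4, ∫ ω, A k * B l * (U k ω * U l ω) ∂P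
          = A k * B l * (if k = l then V k else 0) := by
        intro l; rw [integral_const_mul, hG]
      simp_rw [h3]
      simp [mul_ite, mul_zero, Finset.sum_ite_eq]
    simp_rw [h2]
  have hxU : ∀ (i : Fin 3) (ω : Ω),
      x i ω = ∑ k, (![![1,0,0,0], ![c*a,c,1,b], ![0,0,0,1]] : Fin 3 → Fin 4 → ℝ) i k
        * U k ω := by
    intro i ω
    fin_cases i <;>
      simp [hx, hx1, hx2, hx3, hy, hUdef, Fin.sum_univ_four] <;> ring
  have hyU : ∀ ω : Ω, y ω = ∑ k, (![a,1,0,0] : Fin 4 → ℝ) k * U k ω := by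
    intro ω
    simp [hy, hx1, hUdef, Fin.sum_univ_four]
  have hSigE : ∀ i j, Sig i j
      = ∑ k, (![![1,0,0,0], ![c*a,c,1,b], ![0,0,0,1]] : Fin 3 → Fin 4 → ℝ) i k
        * (![![1,0,0,0], ![c*a,c,1,b], ![0,0,0,1]] : Fin 3 → Fin 4 → ℝ) j k * V k := by
    intro i j
    simp only [hSig]
    simp only [hxU]
    exact key _ _
  have hmE : ∀ i, m i
      = ∑ k, (![![1,0,0,0], ![c*a,c,1,b], ![0,0,0,1]] : Fin 3 → Fin 4 → ℝ) i k
        * (![a,1,0,0] : Fin 4 → ℝ) k * V k := by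
    intro i
    simp only [hm]
    simp only [hxU, hyU]
    exact key _ _
  have hSig' : Sig = !![σ1^2, c*a*σ1^2, 0;
      c*a*σ1^2, c^2*a^2*σ1^2 + c^2*σy^2 + σ2^2 + b^2*σ3^2, b*σ3^2;
      0, b*σ3^2, σ3^2] := by
    ext i j
    rw [hSigE]
    fin_cases i <;> fin_cases j <;> simp [hVdef, Fin.sum_univ_four]
    all_goals try ring
    all_goals tauto
  have hm' : m = ![a*σ1^2, c*a^2*σ1^2 + c*σy^2, 0] := by
    funext i
    rw [hmE]
    fin_cases i <;> simp [hVdef, Fin.sum_univ_four]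
    all_goals try ring
    all_goals tauto
  have hdet : Sig.det = σ1 ^ 2 * σ3 ^ 2 * (σ2 ^ 2 + c ^ 2 * σy ^ 2) := by
    rw [hSig', Matrix.det_fin_three]
    simp
    ring
  have hdu : IsUnit Sig.det := by
    rw [hdet]
    exact isUnit_iff_ne_zero.mpr (by positivity)
  have hSne : σ2 ^ 2 + c ^ 2 * σy ^ 2 ≠ 0 := by positivity
  have hmv : Sig *ᵥ ![a * σ2 ^ 2 / (σ2 ^ 2 + c ^ 2 * σy ^ 2),
      c * σy ^ 2 / (σ2 ^ 2 + c ^ 2 * σy ^ 2),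
      -(b * c * σy ^ 2) / (σ2 ^ 2 + c ^ 2 * σy ^ 2)] = m := by
    rw [hSig', hm']
    funext i
    fin_cases i <;> simp [Matrix.mulVec, dotProduct, Fin.sum_univ_three]
    all_goals field_simp
    all_goals try ring
    all_goals tauto
  exact ⟨hdu, by rw [← hmv, Matrix.mulVec_mulVec, Matrix.nonsing_inv_mul Sig hdu,
    Matrix.one_mulVec]⟩

end Main
end

section
/- Under the linear structural causal model, the weight vector w := (a·σ2²/S, c·σy²/S, −b·c·σy²/S) with S := σ2² + c²·σy² is a global minimizer of the population squared-error risk: for every v ∈ ℝ³, E[(y − ⟨w, x⟩)²] ≤ E[(y − ⟨v, x⟩)²], where ⟨·,·⟩ is the standard inner product on ℝ³. -/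
open MeasureTheory ProbabilityTheory Real Set
open scoped ENNReal NNReal

lemma gauss_moment_Ioi {bb : ℝ} (hb : 0 < bb) :
    ∫ x in Set.Ioi (0:ℝ), x ^ 2 * Real.exp (-bb * x ^ 2)
      = bb ^ (-(3:ℝ)/2) * (1/2) * Real.Gamma (3/2) := by
  have h := integral_rpow_mul_exp_neg_mul_rpow (p := 2) (q := 2)
    (by norm_num) (by norm_num) hb
  rw [show (-((2:ℝ)+1)/2) = -(3:ℝ)/2 by norm_num, show ((2:ℝ)+1)/2 = 3/2 by norm_num] at h
  rw [← h]
  refine MeasureTheory.setIntegral_congr_fun measurableSet_Ioi (fun x hx => ?_)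
  simp [Real.rpow_two]

lemma gauss_moment_real {bb : ℝ} (hb : 0 < bb) :
    ∫ x : ℝ, x ^ 2 * Real.exp (-bb * x ^ 2) = bb ^ (-(3:ℝ)/2) * Real.Gamma (3/2) := by
  have h := integral_comp_abs (f := fun t => t ^ 2 * Real.exp (-bb * t ^ 2))
  simp only [sq_abs] at h
  rw [h, gauss_moment_Ioi hb]; ring

lemma Gamma_three_half : Real.Gamma (3/2) = Real.sqrt π / 2 := by
  rw [show (3/2:ℝ) = 1/2 + 1 by norm_num, Real.Gamma_add_one (by norm_num),
    Real.Gamma_one_half_eq]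
  ring

lemma gaussianPDF_eq_coe (v : ℝ≥0) :
    gaussianPDF 0 v = fun x => ((Real.toNNReal (gaussianPDFReal 0 v x) : ℝ≥0) : ℝ≥0∞) := rfl

lemma integral_sq_gaussianReal (v : ℝ≥0) :
    ∫ x : ℝ, x ^ 2 ∂(gaussianReal 0 v) = v := by
  by_cases hv : v = 0
  · subst hv; simp [gaussianReal_zero_var]
  have hv0 : 0 < (v:ℝ) := by positivity
  have hbb : (0:ℝ) < (2 * (v:ℝ))⁻¹ := by positivity
  rw [gaussianReal_of_var_ne_zero 0 hv, gaussianPDF_eq_coe,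
    integral_withDensity_eq_integral_smul ((measurable_gaussianPDFReal 0 v).real_toNNReal) _]
  have h1 : (fun x : ℝ => Real.toNNReal (gaussianPDFReal 0 v x) • x ^ 2)
      = fun x : ℝ => (Real.sqrt (2 * π * v))⁻¹ * (x ^ 2 * Real.exp (-(2*(v:ℝ))⁻¹ * x ^ 2)) := by
    ext x
    rw [NNReal.smul_def, smul_eq_mul, Real.coe_toNNReal _ (gaussianPDFReal_nonneg 0 v x),
      gaussianPDFReal]
    rw [show -(x - 0)^2/(2*(v:ℝ)) = -(2*(v:ℝ))⁻¹ * x^2 by field_simp; ring]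
    ring
  rw [h1, integral_const_mul, gauss_moment_real hbb, Gamma_three_half]
  have h2 : ((2*(v:ℝ))⁻¹) ^ (-(3:ℝ)/2) = (2*(v:ℝ)) * Real.sqrt (2*(v:ℝ)) := by
    rw [Real.inv_rpow (by positivity), show (-(3:ℝ)/2) = -(3/2:ℝ) by norm_num,
      Real.rpow_neg (by positivity), inv_inv, show (3/2:ℝ) = 1 + 1/2 by norm_num,
      Real.rpow_add (by positivity), Real.rpow_one, ← Real.sqrt_eq_rpow]
  rw [h2, show 2*π*(v:ℝ) = (2*(v:ℝ))*π by ring, Real.sqrt_mul (by positivity)]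
  have hs : Real.sqrt (2*(v:ℝ)) * Real.sqrt (2*(v:ℝ)) = 2*(v:ℝ) :=
    Real.mul_self_sqrt (by positivity)
  have h2v : 0 < Real.sqrt (2*(v:ℝ)) := Real.sqrt_pos.2 (by positivity)
  have hπ : 0 < Real.sqrt π := Real.sqrt_pos.2 Real.pi_pos
  field_simp

lemma integral_id_gaussianReal_zero (v : ℝ≥0) :
    ∫ x : ℝ, x ∂(gaussianReal 0 v) = 0 := by
  have h : (gaussianReal 0 v).map (fun x => -1 * x) = gaussianReal 0 v := by
    rw [show (fun x : ℝ => -1 * x) = ((-1 : ℝ) * ·) from rfl, gaussianReal_map_const_mul (-1)]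
    norm_num
  have h2 : ∫ x : ℝ, x ∂(gaussianReal 0 v) = ∫ x : ℝ, -1 * x ∂(gaussianReal 0 v) := by
    conv_lhs => rw [← h]
    exact integral_map (φ := fun x : ℝ => -1 * x) (f := fun x : ℝ => x)
      (by fun_prop) aestronglyMeasurable_id
  simp only [neg_one_mul] at h2
  rw [integral_neg] at h2
  linarith

lemma integrable_sq_gaussianReal (v : ℝ≥0) :
    Integrable (fun x : ℝ => x ^ 2) (gaussianReal 0 v) := by
  by_cases hv : v = 0
  · subst hv
    rw [gaussianReal_zero_var]
    exact (integrable_const ((0:ℝ)^2)).congr (ae_eq_dirac (fun x : ℝ => x ^ 2)).symm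
  have hbb : (0:ℝ) < (2 * (v:ℝ))⁻¹ := by positivity
  rw [gaussianReal_of_var_ne_zero 0 hv, gaussianPDF_eq_coe,
    integrable_withDensity_iff_integrable_coe_smul
      ((measurable_gaussianPDFReal 0 v).real_toNNReal)]
  have hint : Integrable (fun x : ℝ => x ^ ((2:ℕ):ℝ) * Real.exp (-(2*(v:ℝ))⁻¹ * x ^ 2)) :=
    integrable_rpow_mul_exp_neg_mul_sq hbb (by norm_num)
  simp only [Real.rpow_natCast] at hint
  refine ((hint.const_mul ((Real.sqrt (2 * π * v))⁻¹)).congr ?_)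
  refine ae_of_all _ fun x => ?_
  have hg : ((gaussianPDFReal 0 v x).toNNReal : ℝ) = gaussianPDFReal 0 v x :=
    Real.coe_toNNReal _ (gaussianPDFReal_nonneg 0 v x)
  simp only [smul_eq_mul]
  rw [hg, gaussianPDFReal]
  rw [show -(x - 0)^2/(2*(v:ℝ)) = -(2*(v:ℝ))⁻¹ * x^2 by field_simp; ring]
  ring

lemma memℒp_two_gaussianReal (v : ℝ≥0) : MemLp id 2 (gaussianReal 0 v) := by
  refine (memLp_two_iff_integrable_sq aestronglyMeasurable_id).2 ?_
  simpa using integrable_sq_gaussianReal v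

lemma gauss_facts {Ω : Type*} [MeasurableSpace Ω] (P : Measure Ω) (u : Ω → ℝ)
    (hm : Measurable u) (σ : ℝ)
    (hlaw : P.map u = gaussianReal 0 (Real.toNNReal (σ ^ 2))) :
    MemLp u 2 P ∧ (∫ ω, u ω ∂P) = 0 ∧ (∫ ω, u ω ^ 2 ∂P) = σ ^ 2 := by
  refine ⟨?_, ?_, ?_⟩
  · have h := (memLp_map_measure_iff (μ := P) (p := (2:ℝ≥0∞)) (f := u) (g := (id : ℝ → ℝ))
      aestronglyMeasurable_id hm.aemeasurable)
    rw [hlaw] at h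
    have := h.1 (memℒp_two_gaussianReal _)
    simpa [Function.comp] using this
  · have h1 : ∫ x, x ∂(P.map u) = ∫ ω, u ω ∂P :=
      integral_map hm.aemeasurable aestronglyMeasurable_id
    rw [hlaw, integral_id_gaussianReal_zero] at h1
    exact h1.symm
  · have h1 : ∫ x, x ^ 2 ∂(P.map u) = ∫ ω, u ω ^ 2 ∂P :=
      integral_map hm.aemeasurable (by fun_prop)
    rw [hlaw, integral_sq_gaussianReal] at h1
    rw [← h1, Real.coe_toNNReal _ (sq_nonneg σ)]

set_option maxHeartbeats 1000000 in
/-- Under the linear SCM, the ERM weight vector `w` of Equation (2) is a global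
minimizer of the population squared-error risk. -/
theorem erm_weight_is_global_minimizer
    {Ω : Type*} [MeasurableSpace Ω] (P : Measure Ω) [IsProbabilityMeasure P]
    (a b c σ1 σy σ2 σ3 : ℝ)
    (hσ1 : 0 < σ1) (hσy : 0 < σy) (hσ2 : 0 < σ2) (hσ3 : 0 < σ3)
    (u1 uy u2 u3 : Ω → ℝ)
    (hm1 : Measurable u1) (hmy : Measurable uy)
    (hm2 : Measurable u2) (hm3 : Measurable u3)
    (hindep : iIndepFun ![u1, uy, u2, u3] P)
    (hlaw1 : P.map u1 = gaussianReal 0 (Real.toNNReal (σ1 ^ 2)))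
    (hlawy : P.map uy = gaussianReal 0 (Real.toNNReal (σy ^ 2)))
    (hlaw2 : P.map u2 = gaussianReal 0 (Real.toNNReal (σ2 ^ 2)))
    (hlaw3 : P.map u3 = gaussianReal 0 (Real.toNNReal (σ3 ^ 2)))
    (x1 y x2 x3 : Ω → ℝ)
    (hx1 : x1 = u1)
    (hy : y = fun ω => a * x1 ω + uy ω)
    (hx3 : x3 = u3)
    (hx2 : x2 = fun ω => b * x3 ω + c * y ω + u2 ω)
    (x : Fin 3 → Ω → ℝ) (hx : x = ![x1, x2, x3])
    (S : ℝ) (hS : S = σ2 ^ 2 + c ^ 2 * σy ^ 2)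
    (w : Fin 3 → ℝ)
    (hw : w = ![a * σ2 ^ 2 / S, c * σy ^ 2 / S, -(b * c * σy ^ 2) / S]) :
    ∀ v : Fin 3 → ℝ,
      (∫ ω, (y ω - ∑ i, w i * x i ω) ^ 2 ∂P) ≤
        ∫ ω, (y ω - ∑ i, v i * x i ω) ^ 2 ∂P := by
  intro v
  set U : Fin 4 → Ω → ℝ := ![u1, uy, u2, u3] with hU
  set Vr : Fin 4 → ℝ := ![σ1 ^ 2, σy ^ 2, σ2 ^ 2, σ3 ^ 2] with hVr
  have hmU : ∀ i, Measurable (U i) := by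
    intro i
    fin_cases i
    · exact hm1
    · exact hmy
    · exact hm2
    · exact hm3
  have hfacts : ∀ i, MemLp (U i) 2 P ∧ (∫ ω, U i ω ∂P) = 0 ∧
      (∫ ω, U i ω ^ 2 ∂P) = Vr i := by
    intro i
    fin_cases i
    · simpa [hU, hVr] using gauss_facts P u1 hm1 σ1 hlaw1
    · simpa [hU, hVr] using gauss_facts P uy hmy σy hlawy
    · simpa [hU, hVr] using gauss_facts P u2 hm2 σ2 hlaw2
    · simpa [hU, hVr] using gauss_facts P u3 hm3 σ3 hlaw3
  have hL2 : ∀ i, MemLp (U i) 2 P := fun i => (hfacts i).1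
  have hmean : ∀ i, (∫ ω, U i ω ∂P) = 0 := fun i => (hfacts i).2.1
  have hsq : ∀ i, (∫ ω, U i ω ^ 2 ∂P) = Vr i := fun i => (hfacts i).2.2
  have hprod : ∀ i j, Integrable (fun ω => U i ω * U j ω) P := by
    intro i j
    have h := (hL2 j).smul (p := 2) (q := 2) (r := 1) (hL2 i)
    rw [← memLp_one_iff_integrable]
    exact h
  have hcross : ∀ i j, i ≠ j → (∫ ω, U i ω * U j ω ∂P) = 0 := by
    intro i j hij
    have hind : IndepFun (U i) (U j) P := hindep.indepFun hij
    have h := hind.integral_mul_eq_mul_integral (hmU i).aestronglyMeasurable (hmU j).aestronglyMeasurable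
    simpa [Pi.mul_apply, hmean i, hmean j] using h
  have key : ∀ α : Fin 4 → ℝ,
      (∫ ω, (∑ i, α i * U i ω) ^ 2 ∂P) = ∑ i, α i ^ 2 * Vr i := by
    intro α
    have h1 : ∀ ω, (∑ i, α i * U i ω) ^ 2
        = ∑ i, ∑ j, (α i * α j) * (U i ω * U j ω) := by
      intro ω
      rw [sq, Finset.sum_mul_sum]
      exact Finset.sum_congr rfl fun i _ => Finset.sum_congr rfl fun j _ => by ring
    simp_rw [h1]
    rw [integral_finset_sum _ (fun i _ =>
      integrable_finset_sum _ (fun j _ => (hprod i j).const_mul _))]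
    refine Finset.sum_congr rfl fun i _ => ?_
    rw [integral_finset_sum _ (fun j _ => (hprod i j).const_mul _)]
    calc (∑ j, ∫ ω, (α i * α j) * (U i ω * U j ω) ∂P)
        = ∑ j, (α i * α j) * ∫ ω, U i ω * U j ω ∂P := by
          exact Finset.sum_congr rfl fun j _ => integral_const_mul _ _
      _ = α i ^ 2 * Vr i := by
          rw [Finset.sum_eq_single i]
          · have h2 : (∫ ω, U i ω * U i ω ∂P) = Vr i := by
              simpa [sq] using hsq i
            rw [h2]; ring
          · intro j _ hj
            rw [hcross i j (Ne.symm hj), mul_zero]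
          · intro h; exact absurd (Finset.mem_univ i) h
  have hres : ∀ q : Fin 3 → ℝ, (∫ ω, (y ω - ∑ i, q i * x i ω) ^ 2 ∂P)
      = (a - q 0 - c * a * q 1) ^ 2 * σ1 ^ 2 + (1 - c * q 1) ^ 2 * σy ^ 2
        + (q 1) ^ 2 * σ2 ^ 2 + (q 2 + b * q 1) ^ 2 * σ3 ^ 2 := by
    intro q
    have hpt : ∀ ω, y ω - ∑ i, q i * x i ω
        = ∑ i, (![a - q 0 - c * a * q 1, 1 - c * q 1, -q 1, -(q 2 + b * q 1)]) i * U i ω := by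
      intro ω
      simp only [hx, hy, hx1, hx2, hx3, hU, Fin.sum_univ_three, Fin.sum_univ_four,
        Matrix.cons_val_zero, Matrix.cons_val_one, Matrix.head_cons, Matrix.cons_val_two,
        Matrix.tail_cons, Matrix.cons_val_three]
      ring
    simp_rw [hpt]
    rw [key]
    simp only [hVr, Fin.sum_univ_four, Matrix.cons_val_zero, Matrix.cons_val_one,
      Matrix.head_cons, Matrix.cons_val_two, Matrix.tail_cons, Matrix.cons_val_three]
    ring
  rw [hres v, hres w]
  have hw0 : w 0 = a * σ2 ^ 2 / S := by rw [hw]; rfl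
  have hw1 : w 1 = c * σy ^ 2 / S := by rw [hw]; rfl
  have hw2 : w 2 = -(b * c * σy ^ 2) / S := by rw [hw]; rfl
  have hSpos : 0 < S := by rw [hS]; positivity
  rw [hw0, hw1, hw2]
  have hLHS : (a - a * σ2 ^ 2 / S - c * a * (c * σy ^ 2 / S)) ^ 2 * σ1 ^ 2
      + (1 - c * (c * σy ^ 2 / S)) ^ 2 * σy ^ 2 + (c * σy ^ 2 / S) ^ 2 * σ2 ^ 2
      + (-(b * c * σy ^ 2) / S + b * (c * σy ^ 2 / S)) ^ 2 * σ3 ^ 2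
      = σy ^ 2 * σ2 ^ 2 / S := by
    rw [hS]
    have h1 : σ2 ^ 2 + c ^ 2 * σy ^ 2 > 0 := by positivity
    field_simp
    ring
  rw [hLHS, div_le_iff₀ hSpos]
  subst hS
  nlinarith [sq_nonneg ((σ2 ^ 2 + c ^ 2 * σy ^ 2) * v 1 - c * σy ^ 2),
    mul_nonneg (mul_nonneg (sq_nonneg (a - v 0 - c * a * v 1)) (sq_nonneg σ1)) hSpos.le,
    mul_nonneg (mul_nonneg (sq_nonneg (v 2 + b * v 1)) (sq_nonneg σ3)) hSpos.le]
end

section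
/- Co-parent intervention does not change the model output: for the ERM weight vector w of Equation (2), every point (x1, x2, x3) ∈ ℝ³, and every real perturbation η3, the intervention do(x3 = x3 + η3) produces the counterfactual adversarial example x^{adv} = (x1, x2 + b·η3, x3 + η3) (since the effect b·η3 propagates to the child x2), and ⟨w, x^{adv}⟩ = ⟨w, (x1, x2, x3)⟩; equivalently, w2·b + w3 = 0 for the second and third coordinates of w. -/
open Matrix

/-- Co-parent intervention does not change the model output: intervening
`do(x3 = x3 + η3)` (whose effect `b η3` propagates to the child `x2`) leaves
the ERM model's output unchanged; equivalently `w2 · b + w3 = 0`. -/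
theorem coparent_intervention_no_shift
    (a b c σ1 σy σ2 σ3 : ℝ)
    (hσ1 : 0 < σ1) (hσy : 0 < σy) (hσ2 : 0 < σ2) (hσ3 : 0 < σ3)
    (S : ℝ) (hS : S = σ2 ^ 2 + c ^ 2 * σy ^ 2)
    (w : Fin 3 → ℝ)
    (hw : w = ![a * σ2 ^ 2 / S, c * σy ^ 2 / S, -(b * c * σy ^ 2) / S]) :
    (∀ x1 x2 x3 η3 : ℝ,
      w ⬝ᵥ ![x1, x2 + b * η3, x3 + η3] = w ⬝ᵥ ![x1, x2, x3]) ∧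
    w 1 * b + w 2 = 0 := by
  subst hw
  constructor
  · intro x1 x2 x3 η3
    simp [dotProduct, Fin.sum_univ_three]
    ring
  · simp [Matrix.cons_val_one, Matrix.head_cons]
    ring
end
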